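/- arXiv:1403.5290 — 6 statements merged into one kernel-verified Lean document; each statement's English description precedes it below -/
import Mathlib

section
/- Let α ∈ (0,π), β ∈ ℝ, kₐ ∈ ℝ, |v| ≥ 0, C_L, C_D ∈ ℝ, let (e₁,e₂,e₃) be the standard basis of ℝ³, set vₐ := |v| sin α cos β · e₁ + |v| sin α sin β · e₂ − |v| cos α · e₃, r(β) := −sin β · e₁ + cos β · e₂, F_L := kₐ |v| C_L · (r(β) × vₐ) and F_D := −kₐ |v| C_D · vₐ. Then F_L + F_D = −kₐ |v| · ( (C_D + C_L · cot α) · vₐ + (C_L / sin α) · |v| · e₃ ). -/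
open Real RealInnerProductSpace

/-- Cross product on `ℝ³` (as `EuclideanSpace ℝ (Fin 3)`). -/
noncomputable def cross3 (a b : EuclideanSpace ℝ (Fin 3)) : EuclideanSpace ℝ (Fin 3) :=
  WithLp.toLp 2 ![a 1 * b 2 - a 2 * b 1, a 2 * b 0 - a 0 * b 2, a 0 * b 1 - a 1 * b 0]

/-- Standard orthonormal basis of `ℝ³`. -/
noncomputable def e3 (i : Fin 3) : EuclideanSpace ℝ (Fin 3) := EuclideanSpace.single i 1

/-- with `F_L = kₐ|v|C_L (r(β) × vₐ)` and `F_D = −kₐ|v|C_D vₐ`,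
`F_L + F_D = −kₐ|v| ((C_D + C_L cot α) vₐ + (C_L/sin α)|v| e₃)`. -/
theorem stmt1 (α β ka vnorm CL CD : ℝ) (hα : α ∈ Set.Ioo 0 π) (hv : 0 ≤ vnorm)
    (va r FL FD : EuclideanSpace ℝ (Fin 3))
    (hva : va = (vnorm * Real.sin α * Real.cos β) • e3 0
        + (vnorm * Real.sin α * Real.sin β) • e3 1
        - (vnorm * Real.cos α) • e3 2)
    (hr : r = (-Real.sin β) • e3 0 + Real.cos β • e3 1)
    (hFL : FL = (ka * vnorm * CL) • cross3 r va)
    (hFD : FD = -(ka * vnorm * CD) • va) :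
    FL + FD = (-(ka * vnorm)) •
      ((CD + CL * (Real.cos α / Real.sin α)) • va + (CL / Real.sin α * vnorm) • e3 2) := by
  have hs : Real.sin α ≠ 0 := ne_of_gt (Real.sin_pos_of_pos_of_lt_pi hα.1 hα.2)
  have hpy := Real.sin_sq_add_cos_sq β
  have hpa := Real.sin_sq_add_cos_sq α
  subst hva hr hFL hFD
  ext i
  fin_cases i
  · simp [cross3, e3, EuclideanSpace.single_apply, PiLp.add_apply, PiLp.sub_apply,
      PiLp.smul_apply, PiLp.neg_apply, smul_eq_mul]
    field_simp
    ring_nf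
  · simp [cross3, e3, EuclideanSpace.single_apply, PiLp.add_apply, PiLp.sub_apply,
      PiLp.smul_apply, PiLp.neg_apply, smul_eq_mul]
    field_simp
    ring_nf
  · simp [cross3, e3, EuclideanSpace.single_apply, PiLp.add_apply, PiLp.sub_apply,
      PiLp.smul_apply, PiLp.neg_apply, smul_eq_mul]
    field_simp
    ring_nf
    linear_combination (-(ka*vnorm^2*CL*Real.sin α^2))*hpy + (-(ka*vnorm^2*CL))*hpa
end

section
/- (Spherical equivalence, Proposition 1.) Let α ∈ (0,π), β ∈ ℝ, kₐ ∈ ℝ, |v| ≥ 0, T ∈ ℝ, and let C_D, C_L : (0,π) → ℝ satisfy C_D(α) + C_L(α) cot α = C_{D₀} for a constant C_{D₀}. With (e₁,e₂,e₃) the standard basis of ℝ³, vₐ := |v| sin α cos β e₁ + |v| sin α sin β e₂ − |v| cos α e₃, r(β) := −sin β e₁ + cos β e₂, Fₐ := kₐ|v|C_L(α)(r(β) × vₐ) − kₐ|v|C_D(α) vₐ, F_p := −kₐ C_{D₀} |v| vₐ, and T_p := T + kₐ|v|² C_L(α)/sin α, one has Fₐ − T·e₃ = F_p − T_p·e₃.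 Consequently the dynamics m v̇ = m g + Fₐ − T e₃ can be rewritten as m v̇ = m g + F_p − T_p e₃. -/
open Real RealInnerProductSpace

/-- spherical equivalence, Proposition 1: if the aerodynamic coefficients
satisfy `C_D(α) + C_L(α) cot α = C_{D₀}` on `(0,π)`, then with
`Fₐ = kₐ|v|C_L(α)(r(β) × vₐ) − kₐ|v|C_D(α) vₐ`, `F_p = −kₐ C_{D₀} |v| vₐ`,
`T_p = T + kₐ|v|² C_L(α)/sin α`, one has `Fₐ − T e₃ = F_p − T_p e₃`, hence
`m g + Fₐ − T e₃ = m g + F_p − T_p e₃`. -/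
theorem stmt2 (α β ka vnorm T CD0 : ℝ) (CD CL : ℝ → ℝ)
    (hα : α ∈ Set.Ioo 0 π) (hv : 0 ≤ vnorm)
    (hcoeff : ∀ a ∈ Set.Ioo (0:ℝ) π, CD a + CL a * (Real.cos a / Real.sin a) = CD0)
    (va r Fa Fp : EuclideanSpace ℝ (Fin 3)) (Tp : ℝ)
    (hva : va = (vnorm * Real.sin α * Real.cos β) • e3 0
        + (vnorm * Real.sin α * Real.sin β) • e3 1
        - (vnorm * Real.cos α) • e3 2)
    (hr : r = (-Real.sin β) • e3 0 + Real.cos β • e3 1)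
    (hFa : Fa = (ka * vnorm * CL α) • cross3 r va - (ka * vnorm * CD α) • va)
    (hFp : Fp = -(ka * CD0 * vnorm) • va)
    (hTp : Tp = T + ka * vnorm ^ 2 * CL α / Real.sin α) :
    Fa - T • e3 2 = Fp - Tp • e3 2 ∧
      ∀ (m : ℝ) (g : EuclideanSpace ℝ (Fin 3)),
        m • g + Fa - T • e3 2 = m • g + Fp - Tp • e3 2 := by
  have hs : Real.sin α ≠ 0 := ne_of_gt (Real.sin_pos_of_pos_of_lt_pi hα.1 hα.2)
  have hc := hcoeff α hα
  have key : Fa - T • e3 2 = Fp - Tp • e3 2 := by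
    subst hva hr hFa hFp hTp
    have hc' : CD α * Real.sin α + CL α * Real.cos α = CD0 * Real.sin α := by
      field_simp at hc; linarith
    ext i
    fin_cases i
    · simp [cross3, e3, EuclideanSpace.single_apply]
      linear_combination (-(ka * vnorm ^ 2 * Real.cos β)) * hc'
    · simp [cross3, e3, EuclideanSpace.single_apply]
      linear_combination (-(ka * vnorm ^ 2 * Real.sin β)) * hc'
    · simp [cross3, e3, EuclideanSpace.single_apply]
      field_simp
      linear_combination (ka * vnorm ^ 2 * Real.cos α) * hc'
        - (ka * vnorm ^ 2 * CL α * Real.sin α ^ 2) * Real.sin_sq_add_cos_sq β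
        - (ka * vnorm ^ 2 * CL α) * Real.sin_sq_add_cos_sq α
  refine ⟨key, fun m g => ?_⟩
  rw [add_sub_assoc, add_sub_assoc, key]
end

section
/- Let k, k_r : ℝ → ℝ³ be differentiable with ‖k(t)‖ = ‖k_r(t)‖ = 1 for all t, and suppose k'(t) = ω(t) × k(t) and k_r'(t) = ω_r(t) × k_r(t) for functions ω, ω_r : ℝ → ℝ³. Then the function V₀(t) := 1 − ⟨k(t), k_r(t)⟩ satisfies V₀'(t) = ⟨ω_r(t) − ω(t), k(t) × k_r(t)⟩ for all t. -/
open Real RealInnerProductSpace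

/-- if `k' = ω × k` and `k_r' = ω_r × k_r` with `k, k_r` unit curves, then
`V₀ := 1 − ⟨k, k_r⟩` satisfies `V₀' = ⟨ω_r − ω, k × k_r⟩`. -/
theorem stmt8 (k kr ω ωr : ℝ → EuclideanSpace ℝ (Fin 3))
    (hk : ∀ t, HasDerivAt k (cross3 (ω t) (k t)) t)
    (hkr : ∀ t, HasDerivAt kr (cross3 (ωr t) (kr t)) t)
    (hkunit : ∀ t, ‖k t‖ = 1) (hkrunit : ∀ t, ‖kr t‖ = 1)
    (V₀ : ℝ → ℝ) (hV₀ : ∀ t, V₀ t = 1 - ⟪k t, kr t⟫) :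
    ∀ t, HasDerivAt V₀ (⟪ωr t - ω t, cross3 (k t) (kr t)⟫) t := by
  intro t
  have hVeq : V₀ = fun s => 1 - ⟪k s, kr s⟫ := funext hV₀
  have h := ((hasDerivAt_const t (1:ℝ)).fun_sub ((hk t).inner ℝ (hkr t)))
  rw [hVeq]
  refine h.congr_deriv ?_
  simp only [cross3, PiLp.inner_apply, RCLike.inner_apply, conj_trivial,
    Fin.sum_univ_three, Matrix.cons_val_zero, Matrix.cons_val_one, Matrix.head_cons,
    Matrix.cons_val_two, Matrix.tail_cons, PiLp.sub_apply, PiLp.toLp_apply]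
  ring
end

section
/- (Lyapunov derivative for the thrust direction controller.) Let k, k_r : ℝ → ℝ³ be differentiable with ‖k(t)‖ = ‖k_r(t)‖ = 1 for all t, let γ : ℝ → ℝ be differentiable with γ(t) > 0, let k₁, λ : ℝ → ℝ be functions, set ω_r(t) := k_r(t) × k_r'(t) and ω(t) := (k₁(t) + γ'(t)/γ(t)) · (k(t) × k_r(t)) + ω_r(t) + λ(t) · k(t), and suppose k'(t) = ω(t) × k(t). Then at every t with ⟨k(t), k_r(t)⟩ ≠ −1, the function V₁(t) := (γ(t)²/2) · (1 − ⟨k(t), k_r(t)⟩)/(1 + ⟨k(t), k_r(t)⟩) is differentiable and satisfies V₁'(t) = −2 k₁(t) V₁(t). -/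
open Real RealInnerProductSpace

private lemma key3 (a lam : ℝ) (u v w : EuclideanSpace ℝ (Fin 3))
    (hu : ⟪u, u⟫ = (1:ℝ)) (hv : ⟪v, v⟫ = (1:ℝ)) (hvw : ⟪v, w⟫ + ⟪w, v⟫ = (0:ℝ)) :
    ⟪u, w⟫ + ⟪cross3 (a • cross3 u v + cross3 v w + lam • u) u, v⟫
      = a * (1 - ⟪u, v⟫ ^ 2) := by
  simp only [cross3, PiLp.inner_apply, RCLike.inner_apply, conj_trivial,
    Fin.sum_univ_three, Matrix.cons_val_zero, Matrix.cons_val_one, Matrix.head_cons,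
    Matrix.cons_val_two, Matrix.tail_cons, PiLp.add_apply, PiLp.smul_apply,
    smul_eq_mul] at *
  linear_combination (a * (v 0^2 + v 1^2 + v 2^2)) * hu + a * hv
    - (w 0 * u 0 + w 1 * u 1 + w 2 * u 2) * hv
    + ((u 0 * v 0 + u 1 * v 1 + u 2 * v 2)/2) * hvw

/-- Lyapunov derivative for the thrust direction controller:
under the feedback `ω = (k₁ + γ'/γ) (k × k_r) + ω_r + λ k` with `ω_r = k_r × k_r'`,
`k' = ω × k`, `k, k_r` unit curves and `γ > 0` differentiable, for every `t` with
`⟨k(t), k_r(t)⟩ ≠ −1` the function `V₁ = (γ²/2)(1 − ⟨k,k_r⟩)/(1 + ⟨k,k_r⟩)` satisfies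
`V₁'(t) = −2 k₁(t) V₁(t)`. -/
theorem stmt11 (k kr kr' : ℝ → EuclideanSpace ℝ (Fin 3))
    (γ γ' k₁ lam : ℝ → ℝ)
    (hkunit : ∀ t, ‖k t‖ = 1) (hkrunit : ∀ t, ‖kr t‖ = 1)
    (hkr : ∀ t, HasDerivAt kr (kr' t) t)
    (hγ : ∀ t, HasDerivAt γ (γ' t) t) (hγpos : ∀ t, 0 < γ t)
    (ωr ω : ℝ → EuclideanSpace ℝ (Fin 3))
    (hωr : ∀ t, ωr t = cross3 (kr t) (kr' t))
    (hω : ∀ t, ω t = (k₁ t + γ' t / γ t) • cross3 (k t) (kr t) + ωr t + lam t • k t)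
    (hk : ∀ t, HasDerivAt k (cross3 (ω t) (k t)) t)
    (V₁ : ℝ → ℝ)
    (hV₁ : ∀ t, V₁ t = γ t ^ 2 / 2 * ((1 - ⟪k t, kr t⟫) / (1 + ⟪k t, kr t⟫))) :
    ∀ t, ⟪k t, kr t⟫ ≠ -1 → HasDerivAt V₁ (-2 * k₁ t * V₁ t) t := by
  intro t hne
  set c : ℝ → ℝ := fun s => ⟪k s, kr s⟫ with hc
  have hden : 1 + c t ≠ 0 := by
    simp only [hc]
    intro h; apply hne; linarith
  have hγne : γ t ≠ 0 := ne_of_gt (hγpos t)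
  -- inner-product facts
  have hkk : ∀ s, ⟪k s, k s⟫ = (1:ℝ) := fun s => by
    rw [real_inner_self_eq_norm_sq, hkunit]; norm_num
  have hkrkr : ∀ s, ⟪kr s, kr s⟫ = (1:ℝ) := fun s => by
    rw [real_inner_self_eq_norm_sq, hkrunit]; norm_num
  have horth : ∀ s, ⟪kr s, kr' s⟫ + ⟪kr' s, kr s⟫ = (0:ℝ) := by
    intro s
    have h1 : HasDerivAt (fun u => ⟪kr u, kr u⟫) (⟪kr s, kr' s⟫ + ⟪kr' s, kr s⟫) s :=
      (hkr s).inner ℝ (hkr s)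
    have h2 : HasDerivAt (fun u => ⟪kr u, kr u⟫ : ℝ → ℝ) 0 s := by
      have : (fun u => ⟪kr u, kr u⟫ : ℝ → ℝ) = fun _ => (1:ℝ) := funext fun u => hkrkr u
      rw [this]; exact hasDerivAt_const s 1
    exact h1.unique h2
  -- derivative of c
  set a : ℝ := k₁ t + γ' t / γ t with ha
  have hcderiv : HasDerivAt c (a * (1 - c t ^ 2)) t := by
    have h := (hk t).inner ℝ (hkr t)
    have heq : ⟪k t, kr' t⟫ + ⟪cross3 (ω t) (k t), kr t⟫ = a * (1 - c t ^ 2) := by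
      rw [hω t, hωr t]
      exact key3 a (lam t) (k t) (kr t) (kr' t) (hkk t) (hkrkr t) (horth t)
    exact heq ▸ h
  -- derivative of V₁
  have hVfun : V₁ = fun s => γ s ^ 2 / 2 * ((1 - c s) / (1 + c s)) := funext fun s => hV₁ s
  have h1 : HasDerivAt (fun s => 1 - c s) (-(a * (1 - c t ^ 2))) t := hcderiv.const_sub 1
  have h2 : HasDerivAt (fun s => 1 + c s) (a * (1 - c t ^ 2)) t := hcderiv.const_add 1
  have hq := h1.div h2 hden
  have hg2 := ((hγ t).pow 2).div_const 2
  have hprod := hg2.mul hq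
  replace hprod : HasDerivAt (fun s => γ s ^ 2 / 2 * ((1 - c s) / (1 + c s))) _ t := hprod
  simp only [Pi.div_apply, Pi.pow_apply] at hprod
  rw [hVfun]
  convert hprod using 1
  show -2 * k₁ t * (γ t ^ 2 / 2 * ((1 - c t) / (1 + c t))) = _
  rw [ha]
  push_cast
  field_simp
  ring
end

section
/- (Proposition 3, quantitative form.) Let k, k_r : ℝ → ℝ³ be differentiable with ‖k(t)‖ = ‖k_r(t)‖ = 1, let γ : ℝ → ℝ be differentiable with γ(t) ≥ γ_min > 0, let k₁ : ℝ → ℝ satisfy k₁(t) ≥ k_min > 0, let λ : ℝ → ℝ, set ω_r := k_r × k_r' and ω := (k₁ + γ'/γ)(k × k_r) + ω_r + λ k, and suppose k' = ω × k. If ⟨k(t), k_r(t)⟩ > −1 for all t ∈ [0,T], then for all t ∈ [0,T]: γ(t)² (1 − ⟨k(t),k_r(t)⟩)/(1 + ⟨k(t),k_r(t)⟩) ≤ γ(0)² (1 − ⟨k(0),k_r(0)⟩)/(1 + ⟨k(0),k_r(0)⟩) · exp(−2 k_min t), and consequently ‖k(t) − k_r(t)‖² ≤ (4 γ(0)²/γ_min²)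 · (1 − ⟨k(0),k_r(0)⟩)/(1 + ⟨k(0),k_r(0)⟩) · exp(−2 k_min t). -/
open Real RealInnerProductSpace

private lemma crossKey (u v w : EuclideanSpace ℝ (Fin 3)) (a l : ℝ) :
    ⟪cross3 (a • cross3 u v + cross3 v w + l • u) u, v⟫ + ⟪u, w⟫ =
    a * (⟪u,u⟫ * ⟪v,v⟫ - ⟪u,v⟫^2) + ⟪u,v⟫*⟪v,w⟫ - ⟪u,w⟫*⟪v,v⟫ + ⟪u,w⟫ := by
  simp [cross3, PiLp.inner_apply, Fin.sum_univ_three, PiLp.add_apply, PiLp.smul_apply,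
    smul_eq_mul, Matrix.cons_val_zero, Matrix.cons_val_one, Matrix.head_cons, EuclideanSpace.real_norm_sq_eq]
  ring

/-- Proposition 3, quantitative form: under the feedback angular velocity
`ω = (k₁ + γ'/γ)(k × k_r) + ω_r + λ k` with `ω_r = k_r × k_r'`, `k' = ω × k`,
unit curves `k, k_r`, gains `γ ≥ γ_min > 0` and `k₁ ≥ k_min > 0`, if
`⟨k(t), k_r(t)⟩ > −1` on `[0,T]` then for all `t ∈ [0,T]` the Lyapunov function
`γ²(1 − ⟨k,k_r⟩)/(1 + ⟨k,k_r⟩)` decays as `exp(−2 k_min t)` from its initial value,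
and `‖k(t) − k_r(t)‖²` is bounded accordingly. -/
theorem stmt12 (k kr kr' : ℝ → EuclideanSpace ℝ (Fin 3))
    (γ γ' k₁ lam : ℝ → ℝ) (γmin kmin T : ℝ)
    (hγmin : 0 < γmin) (hkmin : 0 < kmin)
    (hkunit : ∀ t, ‖k t‖ = 1) (hkrunit : ∀ t, ‖kr t‖ = 1)
    (hkr : ∀ t, HasDerivAt kr (kr' t) t)
    (hγ : ∀ t, HasDerivAt γ (γ' t) t) (hγlb : ∀ t, γmin ≤ γ t)
    (hk₁lb : ∀ t, kmin ≤ k₁ t)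
    (ωr ω : ℝ → EuclideanSpace ℝ (Fin 3))
    (hωr : ∀ t, ωr t = cross3 (kr t) (kr' t))
    (hω : ∀ t, ω t = (k₁ t + γ' t / γ t) • cross3 (k t) (kr t) + ωr t + lam t • k t)
    (hk : ∀ t, HasDerivAt k (cross3 (ω t) (k t)) t)
    (hne : ∀ t ∈ Set.Icc 0 T, -1 < ⟪k t, kr t⟫) :
    ∀ t ∈ Set.Icc 0 T,
      γ t ^ 2 * ((1 - ⟪k t, kr t⟫) / (1 + ⟪k t, kr t⟫)) ≤
        γ 0 ^ 2 * ((1 - ⟪k 0, kr 0⟫) / (1 + ⟪k 0, kr 0⟫)) * Real.exp (-2 * kmin * t) ∧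
      ‖k t - kr t‖ ^ 2 ≤
        4 * γ 0 ^ 2 / γmin ^ 2 * ((1 - ⟪k 0, kr 0⟫) / (1 + ⟪k 0, kr 0⟫)) *
          Real.exp (-2 * kmin * t) := by
  set c : ℝ → ℝ := fun s => ⟪k s, kr s⟫ with hc_def
  have hγpos : ∀ s, 0 < γ s := fun s => lt_of_lt_of_le hγmin (hγlb s)
  have hγne : ∀ s, γ s ≠ 0 := fun s => (hγpos s).ne'
  have hkk : ∀ s, ⟪k s, k s⟫ = 1 := by
    intro s
    rw [real_inner_self_eq_norm_sq, hkunit]; norm_num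
  have hkrkr : ∀ s, ⟪kr s, kr s⟫ = 1 := by
    intro s
    rw [real_inner_self_eq_norm_sq, hkrunit]; norm_num
  have hkrkr' : ∀ s, ⟪kr s, kr' s⟫ = 0 := by
    intro s
    have h1 : HasDerivAt (fun u => ⟪kr u, kr u⟫) (⟪kr s, kr' s⟫ + ⟪kr' s, kr s⟫) s :=
      HasDerivAt.inner ℝ (hkr s) (hkr s)
    have h2 : HasDerivAt (fun u => ⟪kr u, kr u⟫) 0 s := by
      have he : (fun u => ⟪kr u, kr u⟫) = fun _ => (1:ℝ) := funext hkrkr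
      rw [he]; exact hasDerivAt_const _ _
    have h3 := h1.unique h2
    have h4 : ⟪kr' s, kr s⟫ = ⟪kr s, kr' s⟫ := real_inner_comm _ _
    linarith
  have hcle : ∀ s, c s ≤ 1 := by
    intro s
    have := real_inner_le_norm (k s) (kr s)
    rw [hkunit, hkrunit] at this
    simpa [hc_def] using this
  have hcderiv : ∀ s, HasDerivAt c ((k₁ s + γ' s / γ s) * (1 - c s ^ 2)) s := by
    intro s
    have h := HasDerivAt.inner ℝ (hk s) (hkr s)
    refine h.congr_deriv ?_
    symm
    rw [hω s, hωr s]
    have key := crossKey (k s) (kr s) (kr' s) (k₁ s + γ' s / γ s) (lam s)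
    rw [hkk, hkrkr, hkrkr'] at key
    simp only [hc_def]
    linear_combination -key
  have hccont : Continuous c :=
    continuous_iff_continuousAt.mpr fun s => (hcderiv s).continuousAt
  have hγcont : Continuous γ :=
    continuous_iff_continuousAt.mpr fun s => (hγ s).continuousAt
  set V : ℝ → ℝ := fun s => γ s ^ 2 * ((1 - c s) / (1 + c s)) with hV_def
  set W : ℝ → ℝ := fun s => V s * Real.exp (2 * kmin * s) with hW_def
  have hVd : ∀ s, 1 + c s ≠ 0 → HasDerivAt V (-2 * k₁ s * V s) s := by
    intro s hs
    have h1 : HasDerivAt (fun u => γ u ^ 2) (2 * γ s * γ' s) s := by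
      simpa [mul_comm, mul_assoc, mul_left_comm] using (hγ s).fun_pow 2
    have h2 := ((hcderiv s).const_sub 1).div ((hcderiv s).const_add 1) hs
    have h3 := h1.mul h2
    refine h3.congr_deriv ?_
    symm
    have hγs := hγne s
    simp only [hV_def, Pi.div_apply]
    field_simp
    ring
  have hVnonneg : ∀ s, 0 < 1 + c s → 0 ≤ V s := by
    intro s hs
    have h1 : (0:ℝ) ≤ 1 - c s := by linarith [hcle s]
    have := div_nonneg h1 hs.le
    positivity
  have hWd : ∀ s, 1 + c s ≠ 0 →
      HasDerivAt W ((-2 * k₁ s + 2 * kmin) * V s * Real.exp (2 * kmin * s)) s := by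
    intro s hs
    have he : HasDerivAt (fun u => Real.exp (2 * kmin * u)) (Real.exp (2 * kmin * s) * (2 * kmin)) s := by
      simpa using (((hasDerivAt_id s).const_mul (2 * kmin)).exp)
    have := (hVd s hs).mul he
    refine this.congr_deriv ?_
    symm
    ring
  have hmono : AntitoneOn W (Set.Icc 0 T) := by
    apply antitoneOn_of_deriv_nonpos (convex_Icc 0 T)
    · apply ContinuousOn.mul
      · apply ContinuousOn.mul (hγcont.pow 2).continuousOn
        exact ContinuousOn.div (continuous_const.sub hccont).continuousOn
          (continuous_const.add hccont).continuousOn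
          (fun x hx => by have := hne x hx; simp only [hc_def] at *; intro h; linarith)
      · exact (Real.continuous_exp.comp (continuous_const.mul continuous_id)).continuousOn
    · intro x hx
      rw [interior_Icc] at hx
      have hpos : 0 < 1 + c x := by
        have := hne x (Set.mem_Icc_of_Ioo hx); simp only [hc_def] at *; linarith
      exact (hWd x hpos.ne').differentiableAt.differentiableWithinAt
    · intro x hx
      rw [interior_Icc] at hx
      have hpos : 0 < 1 + c x := by
        have := hne x (Set.mem_Icc_of_Ioo hx); simp only [hc_def] at *; linarith
      rw [(hWd x hpos.ne').deriv]
      have h1 : -2 * k₁ x + 2 * kmin ≤ 0 := by linarith [hk₁lb x]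
      have h2 : 0 ≤ V x := hVnonneg x hpos
      have h3 : (0:ℝ) < Real.exp (2 * kmin * x) := Real.exp_pos _
      have h4 : 0 ≤ V x * Real.exp (2 * kmin * x) := mul_nonneg h2 h3.le
      nlinarith [mul_nonneg (neg_nonneg.mpr h1) h4]
  intro t ht
  obtain ⟨ht0, htT⟩ := ht
  have h0mem : (0:ℝ) ∈ Set.Icc 0 T := ⟨le_refl 0, le_trans ht0 htT⟩
  have htmem : t ∈ Set.Icc (0:ℝ) T := ⟨ht0, htT⟩
  have hWle : W t ≤ W 0 := hmono h0mem htmem ht0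
  have hW0 : W 0 = V 0 := by simp [hW_def]
  have hEpos : (0:ℝ) < Real.exp (2 * kmin * t) := Real.exp_pos _
  have hexpneg : Real.exp (-2 * kmin * t) = (Real.exp (2 * kmin * t))⁻¹ := by
    rw [← Real.exp_neg]; ring_nf
  have hVle : V t ≤ V 0 * Real.exp (-2 * kmin * t) := by
    rw [hexpneg, ← div_eq_mul_inv]
    rw [le_div_iff₀ hEpos]
    calc V t * Real.exp (2 * kmin * t) = W t := rfl
      _ ≤ W 0 := hWle
      _ = V 0 := hW0
  have hpos_t : 0 < 1 + c t := by
    have := hne t htmem; simp only [hc_def] at *; linarith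
  constructor
  · exact hVle
  · have hnorm : ‖k t - kr t‖ ^ 2 = 2 - 2 * c t := by
      have h := norm_sub_sq_real (k t) (kr t)
      rw [hkunit, hkrunit] at h
      simp only [hc_def]
      rw [h]; ring
    set r : ℝ := (1 - c t) / (1 + c t) with hr_def
    have hr0 : 0 ≤ r := div_nonneg (by linarith [hcle t]) hpos_t.le
    have hrel : (1 + c t) * r = 1 - c t := by
      rw [hr_def]; field_simp
    have hstep1 : ‖k t - kr t‖ ^ 2 ≤ 4 * r := by
      rw [hnorm]
      nlinarith [hcle t, hr0, hrel]
    have hγ2 : γmin ^ 2 ≤ γ t ^ 2 := by nlinarith [hγlb t, hγmin]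
    have h4 : γmin ^ 2 * r ≤ γ t ^ 2 * r := mul_le_mul_of_nonneg_right hγ2 hr0
    have h5 : γmin ^ 2 * r ≤
        γ 0 ^ 2 * ((1 - c 0) / (1 + c 0)) * Real.exp (-2 * kmin * t) := le_trans h4 hVle
    have hγmin2 : (0:ℝ) < γmin ^ 2 := by positivity
    have h6 : r ≤ γ 0 ^ 2 * ((1 - c 0) / (1 + c 0)) * Real.exp (-2 * kmin * t) / γmin ^ 2 :=
      (le_div_iff₀ hγmin2).mpr (by linarith [h5])
    calc ‖k t - kr t‖ ^ 2 ≤ 4 * r := hstep1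
      _ ≤ 4 * (γ 0 ^ 2 * ((1 - c 0) / (1 + c 0)) * Real.exp (-2 * kmin * t) / γmin ^ 2) := by
          linarith
      _ = 4 * γ 0 ^ 2 / γmin ^ 2 * ((1 - ⟪k 0, kr 0⟫) / (1 + ⟪k 0, kr 0⟫)) *
          Real.exp (-2 * kmin * t) := by
          simp only [hc_def]; ring
end

section
/- Let k, k_r ∈ ℝ³ with ‖k‖ = ‖k_r‖ = 1 and ⟨k, k_r⟩ ≠ −1, let γ, m > 0, let F ∈ ℝ³ with γ ≥ ‖F‖, and define V₁ := (γ²/2)·‖k × k_r‖²/(1 + ⟨k, k_r⟩)² and ε := (1/m)·‖F‖·(k × (k_r × k)). Then V₁ ≥ m²‖ε‖²/8, i.e. ‖ε‖ ≤ √(8 V₁)/m. -/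
open Real RealInnerProductSpace

/-- for unit vectors `k, k_r` with `⟨k,k_r⟩ ≠ −1`, gains `γ, m > 0` with
`γ ≥ ‖F‖`, the Lyapunov value `V₁ = (γ²/2)‖k × k_r‖²/(1 + ⟨k,k_r⟩)²` dominates the
perturbation `ε = (1/m)‖F‖ (k × (k_r × k))`: `V₁ ≥ m²‖ε‖²/8`, i.e. `‖ε‖ ≤ √(8V₁)/m`. -/
theorem stmt15 (k kr F : EuclideanSpace ℝ (Fin 3)) (γ m : ℝ)
    (hk : ‖k‖ = 1) (hkr : ‖kr‖ = 1) (h : ⟪k, kr⟫ ≠ -1)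
    (hγ : 0 < γ) (hm : 0 < m) (hγF : ‖F‖ ≤ γ)
    (V₁ : ℝ) (hV₁ : V₁ = γ ^ 2 / 2 * (‖cross3 k kr‖ ^ 2 / (1 + ⟪k, kr⟫) ^ 2))
    (ε : EuclideanSpace ℝ (Fin 3)) (hε : ε = (1 / m * ‖F‖) • cross3 k (cross3 kr k)) :
    m ^ 2 * ‖ε‖ ^ 2 / 8 ≤ V₁ ∧ ‖ε‖ ≤ Real.sqrt (8 * V₁) / m := by
  have hnorm : ∀ v : EuclideanSpace ℝ (Fin 3), ‖v‖ ^ 2 = v 0 ^ 2 + v 1 ^ 2 + v 2 ^ 2 := by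
    intro v
    rw [EuclideanSpace.norm_sq_eq]
    simp [Fin.sum_univ_three]
  have hin : ⟪k, kr⟫ = k 0 * kr 0 + k 1 * kr 1 + k 2 * kr 2 := by
    simp [PiLp.inner_apply, Fin.sum_univ_three]
    ring
  set c : ℝ := ⟪k, kr⟫ with hc
  clear_value c
  have hk2 : k 0 ^ 2 + k 1 ^ 2 + k 2 ^ 2 = 1 := by
    have := hnorm k; rw [hk] at this; linarith [this]
  have hr2 : kr 0 ^ 2 + kr 1 ^ 2 + kr 2 ^ 2 = 1 := by
    have := hnorm kr; rw [hkr] at this; linarith [this]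
  -- coordinates of cross products
  have hcross : ∀ a b : EuclideanSpace ℝ (Fin 3),
      (cross3 a b) 0 = a 1 * b 2 - a 2 * b 1 ∧
      (cross3 a b) 1 = a 2 * b 0 - a 0 * b 2 ∧
      (cross3 a b) 2 = a 0 * b 1 - a 1 * b 0 := by
    intro a b
    simp [cross3]
  have hS : ‖cross3 k kr‖ ^ 2 = 1 - c ^ 2 := by
    rw [hnorm]
    obtain ⟨h0, h1, h2⟩ := hcross k kr
    rw [h0, h1, h2, hin]
    linear_combination (kr 0 ^ 2 + kr 1 ^ 2 + kr 2 ^ 2) * hk2 + hr2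
  have hN : ‖cross3 k (cross3 kr k)‖ ^ 2 = 1 - c ^ 2 := by
    rw [hnorm]
    obtain ⟨h0, h1, h2⟩ := hcross k (cross3 kr k)
    obtain ⟨g0, g1, g2⟩ := hcross kr k
    rw [h0, h1, h2, g0, g1, g2, hin]
    linear_combination (k 0 ^ 2 + k 1 ^ 2 + k 2 ^ 2) ^ 2 * hr2 +
      (k 0 ^ 2 + k 1 ^ 2 + k 2 ^ 2 + 1 -
        (k 0 * kr 0 + k 1 * kr 1 + k 2 * kr 2) ^ 2) * hk2
  have hcle : |c| ≤ 1 := by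
    rw [hc]
    have := abs_real_inner_le_norm k kr
    rw [hk, hkr] at this; simpa using this
  have hc1 : c ≤ 1 := (abs_le.mp hcle).2
  have hcm1 : -1 < c := lt_of_le_of_ne (abs_le.mp hcle).1 (fun he => h he.symm)
  have hd : (0:ℝ) < 1 + c := by linarith
  have hεn : ‖ε‖ ^ 2 = ‖F‖ ^ 2 / m ^ 2 * (1 - c ^ 2) := by
    rw [hε, norm_smul, mul_pow, ← hN, Real.norm_eq_abs,
      abs_of_nonneg (by positivity : (0:ℝ) ≤ 1 / m * ‖F‖)]
    have hs : (1 / m * ‖F‖) ^ 2 = ‖F‖ ^ 2 / m ^ 2 := by field_simp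
    rw [hs]
  have hkey : (1 - c ^ 2) / 4 ≤ (1 - c ^ 2) / (1 + c) ^ 2 := by
    rw [div_le_div_iff₀ (by norm_num) (by positivity)]
    nlinarith [mul_nonneg (sub_nonneg.2 hc1) (sq_nonneg (1 + c)), hd.le]
  have hF2 : ‖F‖ ^ 2 ≤ γ ^ 2 := pow_le_pow_left₀ (norm_nonneg F) hγF 2
  have hc2 : (0:ℝ) ≤ 1 - c ^ 2 := by
    have := mul_nonneg (sub_nonneg.2 hc1) hd.le
    nlinarith [this]
  have main : m ^ 2 * ‖ε‖ ^ 2 / 8 ≤ V₁ := by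
    rw [hV₁, hS, hεn]
    have h1 : m ^ 2 * (‖F‖ ^ 2 / m ^ 2 * (1 - c ^ 2)) / 8 = ‖F‖ ^ 2 * (1 - c ^ 2) / 8 := by
      field_simp
    rw [h1]
    have h2 : ‖F‖ ^ 2 * (1 - c ^ 2) / 8 ≤ γ ^ 2 * (1 - c ^ 2) / 8 := by
      have := mul_le_mul_of_nonneg_right hF2 hc2
      linarith
    have h3 : γ ^ 2 * (1 - c ^ 2) / 8 = γ ^ 2 / 2 * ((1 - c ^ 2) / 4) := by ring
    have h4 : γ ^ 2 / 2 * ((1 - c ^ 2) / 4) ≤ γ ^ 2 / 2 * ((1 - c ^ 2) / (1 + c) ^ 2) := by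
      apply mul_le_mul_of_nonneg_left hkey (by positivity)
    linarith
  refine ⟨main, ?_⟩
  rw [le_div_iff₀ hm]
  have hnn : 0 ≤ ‖ε‖ * m := mul_nonneg (norm_nonneg ε) hm.le
  rw [show Real.sqrt (8 * V₁) = Real.sqrt (8 * V₁) from rfl]
  have heq : (‖ε‖ * m) ^ 2 = m ^ 2 * ‖ε‖ ^ 2 := by ring
  have : (‖ε‖ * m) ^ 2 ≤ 8 * V₁ := by rw [heq]; linarith [main]
  calc ‖ε‖ * m = Real.sqrt ((‖ε‖ * m) ^ 2) := by rw [Real.sqrt_sq hnn]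
    _ ≤ Real.sqrt (8 * V₁) := Real.sqrt_le_sqrt this
end
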